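/- Let R ≤ M_n(ℂ) be a regular quantum graph, and assume that n is odd. Then dim(R) ≠ 1. -/

import Mathlib

namespace QG

open Matrix

abbrev Mat (n : ℕ) := Matrix (Fin n) (Fin n) ℂ

/-- `R` is a quantum graph: closed under conjugate transpose and every element is traceless. -/
def IsQuantumGraph {n : ℕ} (R : Submodule ℂ (Mat n)) : Prop :=
  ∀ a ∈ R, aᴴ ∈ R ∧ a.trace = 0

/-- `a : Fin d → Mat n` is an orthonormal basis of `R` with respect to the normalized
trace inner product `⟨a, b⟩ = tr(aᴴ b) / n`. -/
def IsONBasis {n d : ℕ} (R : Submodule ℂ (Mat n)) (a : Fin d → Mat n) : Prop :=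
  (∀ i, a i ∈ R) ∧ Submodule.span ℂ (Set.range a) = R ∧
    ∀ i j, ((a i)ᴴ * a j).trace / (n : ℂ) = if i = j then 1 else 0

/-- `R` is regular: its degree matrix `∑ aᵢ aᵢᴴ` (for an orthonormal basis, independent of
the choice) is a scalar multiple of the identity. -/
def IsRegular {n : ℕ} (R : Submodule ℂ (Mat n)) : Prop :=
  ∃ (d : ℕ) (a : Fin d → Mat n), IsONBasis R a ∧
    ∃ c : ℂ, (∑ i, a i * (a i)ᴴ) = c • (1 : Mat n)

/-- Auxiliary: a Hermitian matrix squaring to `1` with zero trace lives in even dimension. -/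
theorem even_of_hermitian_involution {n : ℕ} (u : Mat n) (hu : u.IsHermitian)
    (huu : u * u = 1) (htr : u.trace = 0) : Even n := by
  set ev := hu.eigenvalues with hev
  have hsq : ∀ j, ev j = 1 ∨ ev j = -1 := by
    intro j
    have hv := hu.mulVec_eigenvectorBasis j
    have hvne : (⇑(hu.eigenvectorBasis j) : Fin n → ℂ) ≠ 0 := by
      intro h0
      have := hu.eigenvectorBasis.orthonormal.1 j
      rw [show (hu.eigenvectorBasis j) = 0 from by ext k; exact congrFun h0 k] at this
      simp at this
    have h2 : (ev j * ev j) • (⇑(hu.eigenvectorBasis j) : Fin n → ℂ)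
        = (1:ℝ) • (⇑(hu.eigenvectorBasis j) : Fin n → ℂ) := by
      have : u *ᵥ (u *ᵥ ⇑(hu.eigenvectorBasis j)) = (u * u) *ᵥ ⇑(hu.eigenvectorBasis j) := by
        rw [mulVec_mulVec]
      rw [hv, mulVec_smul, hv, huu, one_mulVec, smul_smul] at this
      simpa using this
    have := smul_left_injective ℝ hvne h2
    exact mul_self_eq_one_iff.mp this
  have htr2 : ∑ j, (ev j : ℂ) = 0 := by
    have hspec := hu.spectral_theorem
    have h1 : u.trace = (Matrix.diagonal (RCLike.ofReal ∘ ev) : Mat n).trace := by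
      conv_lhs => rw [hspec, Unitary.conjStarAlgAut_apply]
      rw [Matrix.trace_mul_cycle]
      rw [show (star (hu.eigenvectorUnitary : Mat n)) * hu.eigenvectorUnitary = 1
        from Unitary.coe_star_mul_self _, Matrix.one_mul]
    rw [htr] at h1
    simpa [Matrix.trace_diagonal] using h1.symm
  have htrR : ∑ j, ev j = 0 := by
    have : ((∑ j, ev j : ℝ) : ℂ) = 0 := by push_cast [← htr2]; rfl
    exact_mod_cast this
  classical
  set S := Finset.univ.filter (fun j => ev j = 1) with hS
  have hsplit : ∑ j, ev j
      = (S.card : ℝ) - ((Finset.univ.filter (fun j => ¬ ev j = 1)).card : ℝ) := by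
    rw [← Finset.sum_filter_add_sum_filter_not Finset.univ (fun j => ev j = 1)]
    rw [Finset.sum_congr rfl (fun j hj => (Finset.mem_filter.mp hj).2),
        Finset.sum_congr rfl
          (fun j hj => ((hsq j).resolve_left (Finset.mem_filter.mp hj).2 : ev j = -1))]
    simp [sub_eq_add_neg, hS]
  have hcards : S.card + (Finset.univ.filter (fun j => ¬ ev j = 1)).card = n := by
    rw [Finset.card_filter_add_card_filter_not]; simp
  have hrc : (S.card : ℝ) = ((Finset.univ.filter (fun j => ¬ ev j = 1)).card : ℝ) := by
    rw [htrR] at hsplit; linarith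
  have hc : S.card = (Finset.univ.filter (fun j => ¬ ev j = 1)).card := by exact_mod_cast hrc
  exact ⟨S.card, by omega⟩

/-- a regular quantum graph in `M_n(ℂ)` with `n` odd cannot be 1-dimensional. -/
theorem stmt6 {n : ℕ} (R : Submodule ℂ (Mat n)) (hQG : IsQuantumGraph R)
    (hreg : IsRegular R) (hodd : Odd n) : Module.finrank ℂ ↥R ≠ 1 := by
  intro h1
  obtain ⟨d, a, ⟨hmem, hspan, horth⟩, c, hsum⟩ := hreg
  have hn0 : (n : ℂ) ≠ 0 := Nat.cast_ne_zero.mpr hodd.pos.ne'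
  -- the orthonormal family is linearly independent, so `d = 1`
  have hli : LinearIndependent ℂ a := by
    rw [Fintype.linearIndependent_iff]
    intro g hg j
    have : ((a j)ᴴ * (∑ i, g i • a i)).trace / (n : ℂ) = g j := by
      rw [Finset.mul_sum]
      simp only [Matrix.mul_smul, Matrix.trace_sum, Matrix.trace_smul, smul_eq_mul]
      rw [Finset.sum_div]
      rw [Finset.sum_congr rfl (fun i _ => by rw [mul_div_assoc, horth j i])]
      simp [Finset.sum_ite_eq', eq_comm]
    rw [hg] at this
    simpa using this.symm
  have hd : d = 1 := by
    have := finrank_span_eq_card hli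
    rw [hspan, h1] at this
    simpa using this.symm
  subst hd
  set A := a 0 with hA
  have hnorm : (Aᴴ * A).trace = (n : ℂ) := by
    have := horth 0 0
    simp only [if_pos rfl] at this
    field_simp at this
    simpa using this
  have hAne : A ≠ 0 := by
    intro h0
    rw [h0] at hnorm
    simp at hnorm
    exact hn0 hnorm.symm
  have hAA : A * Aᴴ = c • 1 := by simpa [Fin.sum_univ_one] using hsum
  have hc : c = 1 := by
    have h2 : (A * Aᴴ).trace = c * n := by
      rw [hAA, Matrix.trace_smul, Matrix.trace_one]
      simp [mul_comm]
    rw [Matrix.trace_mul_comm, hnorm] at h2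
    field_simp at h2
    exact h2.symm ▸ rfl
  rw [hc, one_smul] at hAA
  obtain ⟨hAH, htrA⟩ := hQG A (hmem 0)
  have hspan1 : R = Submodule.span ℂ {A} := by
    rw [← hspan]
    congr 1
    exact Set.range_unique
  obtain ⟨l, hl⟩ := Submodule.mem_span_singleton.mp (hspan1 ▸ hAH)
  have hll : (starRingEnd ℂ) l * l = 1 := by
    have hAe : ((starRingEnd ℂ) l * l) • A = (1:ℂ) • A := by
      have : A = ((starRingEnd ℂ) l) • Aᴴ := by
        conv_lhs => rw [← conjTranspose_conjTranspose A, ← hl]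
        rw [conjTranspose_smul]
        rfl
      conv_rhs => rw [one_smul, this, ← hl, smul_smul]
    exact smul_left_injective ℂ hAne hAe
  obtain ⟨m, hm⟩ := IsAlgClosed.exists_pow_nat_eq l (n := 2) (by norm_num)
  have hmm : (starRingEnd ℂ) m * m = 1 := by
    have h2 : ((starRingEnd ℂ) m * m) * ((starRingEnd ℂ) m * m) = 1 := by
      rw [← sq, mul_pow, ← map_pow, hm, hll]
    rcases mul_self_eq_one_iff.mp h2 with h | h
    · exact h
    · exfalso
      rw [mul_comm, Complex.mul_conj] at h
      have hr : (Complex.normSq m : ℝ) = -1 := by exact_mod_cast h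
      linarith [Complex.normSq_nonneg m]
  set u := m • A with hu_def
  have hsm : star m * l = m := by
    rw [Complex.star_def, ← hm, pow_two, ← mul_assoc, hmm, one_mul]
  have huH : u.IsHermitian := by
    show uᴴ = u
    rw [hu_def, conjTranspose_smul, hl.symm, smul_smul, hsm]
  have huu : u * u = 1 := by
    have h2 : u * uᴴ = 1 := by
      rw [hu_def, conjTranspose_smul, Matrix.smul_mul, Matrix.mul_smul, smul_smul, hAA,
        mul_comm, Complex.star_def, hmm, one_smul]
    rwa [huH.eq] at h2
  have htru : u.trace = 0 := by
    rw [hu_def, Matrix.trace_smul, htrA, smul_zero]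
  exact (Nat.not_even_iff_odd.mpr hodd) (even_of_hermitian_involution u huH huu htru)


end QG
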